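/- Let t ≥ 1 be an integer. A (2t+1)-regular finite multigraph G has a nowhere-zero (2 + 2/(2t−1))-flow if and only if G has a 1-factor F such that G − F is bipartite. -/

import Mathlib

structure Multigraph where
  V : Type
  E : Type
  [finV : Finite V]
  [finE : Finite E]
  fst : E → V
  snd : E → V

attribute [instance] Multigraph.finV Multigraph.finE

namespace Multigraph

/-- The degree of a vertex (loops count twice). -/
noncomputable def degree (G : Multigraph) (v : G.V) : ℕ :=
  Nat.card {e : G.E // G.fst e = v} + Nat.card {e : G.E // G.snd e = v}

def IsRegular (G : Multigraph) (k : ℕ) : Prop := ∀ v, G.degree v = k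

/-- `φ` is a nowhere-zero `r`-flow: values have absolute value in `[1, r-1]`
(the sign of `φ e` encodes the chosen orientation of `e`), and flow is conserved
at every vertex. -/
def IsNowhereZeroFlow (G : Multigraph) (r : ℝ) (φ : G.E → ℝ) : Prop :=
  (∀ e, 1 ≤ |φ e| ∧ |φ e| ≤ r - 1) ∧
  ∀ v : G.V, (∑ᶠ e ∈ {e : G.E | G.fst e = v}, φ e) = ∑ᶠ e ∈ {e : G.E | G.snd e = v}, φ e

def HasNowhereZeroFlow (G : Multigraph) (r : ℝ) : Prop := ∃ φ, G.IsNowhereZeroFlow r φ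

/-- The circular flow number, `⊤` if `G` has no nowhere-zero flow. -/
noncomputable def flowNumber (G : Multigraph) : EReal :=
  sInf {x : EReal | ∃ r : ℝ, x = (r : EReal) ∧ G.HasNowhereZeroFlow r}

def Bipartite (G : Multigraph) : Prop :=
  ∃ c : G.V → Bool, ∀ e, c (G.fst e) ≠ c (G.snd e)

def IsOneFactor (G : Multigraph) (F : Set G.E) : Prop :=
  (∀ e ∈ F, G.fst e ≠ G.snd e) ∧
  ∀ v : G.V, ∃! e : G.E, e ∈ F ∧ (G.fst e = v ∨ G.snd e = v)

/-- `G - F` is bipartite. -/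
def BipartiteWithout (G : Multigraph) (F : Set G.E) : Prop :=
  ∃ c : G.V → Bool, ∀ e ∉ F, c (G.fst e) ≠ c (G.snd e)

def IsProperEdgeColoring (G : Multigraph) {n : ℕ} (c : G.E → Fin n) : Prop :=
  ∀ e₁ e₂ : G.E, e₁ ≠ e₂ →
    (G.fst e₁ = G.fst e₂ ∨ G.fst e₁ = G.snd e₂ ∨ G.snd e₁ = G.fst e₂ ∨ G.snd e₁ = G.snd e₂) →
    c e₁ ≠ c e₂

noncomputable def edgeChromaticNumber (G : Multigraph) : ℕ :=
  sInf {n : ℕ | ∃ c : G.E → Fin n, G.IsProperEdgeColoring c}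

def edgeBoundary (G : Multigraph) (X : Set G.V) : Set G.E :=
  {e | (G.fst e ∈ X) ≠ (G.snd e ∈ X)}

def IsBalancedValuation (G : Multigraph) (w : G.V → ℝ) : Prop :=
  ∀ X : Set G.V, |∑ᶠ v ∈ X, w v| ≤ (G.edgeBoundary X).ncard

end Multigraph

namespace NZF
open Finset

attribute [local instance] Classical.propDecidable

variable {E V : Type} [Fintype E] [DecidableEq E] [DecidableEq V]

def IsInt (x : ℝ) : Prop := ∃ z : ℤ, x = (z : ℝ)

lemma IsInt.add {x y : ℝ} (hx : IsInt x) (hy : IsInt y) : IsInt (x + y) := by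
  obtain ⟨a, rfl⟩ := hx; obtain ⟨b, rfl⟩ := hy; exact ⟨a + b, by push_cast; ring⟩

lemma IsInt.sub {x y : ℝ} (hx : IsInt x) (hy : IsInt y) : IsInt (x - y) := by
  obtain ⟨a, rfl⟩ := hx; obtain ⟨b, rfl⟩ := hy; exact ⟨a - b, by push_cast; ring⟩

lemma isInt_sum {α : Type*} {s : Finset α} {f : α → ℝ} (h : ∀ e ∈ s, IsInt (f e)) :
    IsInt (∑ e ∈ s, f e) := by
  classical
  induction s using Finset.induction_on with
  | empty => exact ⟨0, by simp⟩
  | insert _ _ hnot ih =>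
    rw [Finset.sum_insert hnot]
    exact (h _ (mem_insert_self _ _)).add (ih fun e he => h e (mem_insert_of_mem he))

variable [Fintype V]

/-- conservation is preserved by adding a balanced perturbation -/
lemma cons_push (fs sn : E → V) (ψ : E → ℝ)
    (hc : ∀ v, ∑ e ∈ univ.filter (fun e => fs e = v), ψ e
        = ∑ e ∈ univ.filter (fun e => sn e = v), ψ e)
    (c : E → ℝ) (δ : ℝ)
    (hbal : ∀ v, ∑ e ∈ univ.filter (fun e => fs e = v), c e
        = ∑ e ∈ univ.filter (fun e => sn e = v), c e) (v : V) :
    ∑ e ∈ univ.filter (fun e => fs e = v), (ψ e + δ * c e)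
      = ∑ e ∈ univ.filter (fun e => sn e = v), (ψ e + δ * c e) := by
  rw [Finset.sum_add_distrib, Finset.sum_add_distrib, hc v, ← Finset.mul_sum, ← Finset.mul_sum,
    hbal v]

lemma push_bound {x δ cv : ℝ} {lbx ubx : ℤ} (hl : (lbx:ℝ) ≤ x) (hu : x ≤ ubx) (hδ : 0 < δ)
    (h : (cv = 1 ∧ δ ≤ (⌈x⌉:ℝ) - x) ∨ (cv = -1 ∧ δ ≤ x - (⌊x⌋:ℝ))) :
    (lbx:ℝ) ≤ x + δ * cv ∧ x + δ * cv ≤ ubx := by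
  rcases h with ⟨rfl, hle⟩ | ⟨rfl, hle⟩
  · have hce : ((⌈x⌉:ℤ):ℝ) ≤ ((ubx:ℤ):ℝ) := Int.cast_le.mpr (Int.ceil_le.mpr hu)
    constructor <;> linarith
  · have hce : ((lbx:ℤ):ℝ) ≤ ((⌊x⌋:ℤ):ℝ) := Int.cast_le.mpr (Int.le_floor.mpr hl)
    constructor <;> linarith

set_option maxHeartbeats 1000000 in
/-- Main step: if there is a fractional non-loop edge (and no fractional loops),
we can reduce the number of fractional edges. -/
theorem reduce_frac (fs sn : E → V) (lb ub : E → ℤ) (ψ : E → ℝ)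
    (hb : ∀ e, (lb e : ℝ) ≤ ψ e ∧ ψ e ≤ ub e)
    (hc : ∀ v, ∑ e ∈ univ.filter (fun e => fs e = v), ψ e
        = ∑ e ∈ univ.filter (fun e => sn e = v), ψ e)
    (hnoloop : ∀ e, ¬ IsInt (ψ e) → fs e ≠ sn e)
    (e₀ : E) (he₀ : ¬ IsInt (ψ e₀)) :
    ∃ ψ' : E → ℝ, (∀ e, (lb e : ℝ) ≤ ψ' e ∧ ψ' e ≤ ub e) ∧
      (∀ v, ∑ e ∈ univ.filter (fun e => fs e = v), ψ' e
        = ∑ e ∈ univ.filter (fun e => sn e = v), ψ' e) ∧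
      (univ.filter (fun e => ¬ IsInt (ψ' e))).card
        < (univ.filter (fun e => ¬ IsInt (ψ e))).card := by
  classical
  set N : Finset E := univ.filter (fun e => ¬ IsInt (ψ e)) with hN
  have hmemN : ∀ e, e ∈ N ↔ ¬ IsInt (ψ e) := by intro e; simp [hN]
  -- degree ≥ 2 in the fractional subgraph
  have hdeg2 : ∀ (e : E) (v : V), e ∈ N → (fs e = v ∨ sn e = v) →
      ∃ e', e' ∈ N ∧ e' ≠ e ∧ (fs e' = v ∨ sn e' = v) := by
    intro e v heN hev
    by_contra hcon
    push_neg at hcon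
    have huniq : ∀ e', e' ∈ N → (fs e' = v ∨ sn e' = v) → e' = e := by
      intro e' he'N he'v
      by_contra hne
      rcases he'v with h | h
      · exact (hcon e' he'N hne).1 h
      · exact (hcon e' he'N hne).2 h
    have key : ∀ (w w' : E → V), w e = v → w' e ≠ v →
        (∀ e', (fs e' = v ∨ sn e' = v) ↔ (w e' = v ∨ w' e' = v)) →
        (∀ u, ∑ e' ∈ univ.filter (fun e' => w e' = u), ψ e'
          = ∑ e' ∈ univ.filter (fun e' => w' e' = u), ψ e') → False := by
      intro w w' hwe hw'e hcover hcons
      have h1 : IsInt (∑ e' ∈ univ.filter (fun e' => w' e' = v), ψ e') := by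
        refine isInt_sum fun e' he' => ?_
        simp only [mem_filter, mem_univ, true_and] at he'
        by_contra hfrac
        have := huniq e' ((hmemN e').mpr hfrac) ((hcover e').mpr (Or.inr he'))
        exact hw'e (this ▸ he')
      have h2 : IsInt (∑ e' ∈ (univ.filter (fun e' => w e' = v)).erase e, ψ e') := by
        refine isInt_sum fun e' he' => ?_
        rcases Finset.mem_erase.mp he' with ⟨hne, he''⟩
        simp only [mem_filter, mem_univ, true_and] at he''
        by_contra hfrac
        exact hne (huniq e' ((hmemN e').mpr hfrac) ((hcover e').mpr (Or.inl he'')))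
      have h3 : ψ e + ∑ e' ∈ (univ.filter (fun e' => w e' = v)).erase e, ψ e'
          = ∑ e' ∈ univ.filter (fun e' => w e' = v), ψ e' :=
        Finset.add_sum_erase _ _ (by simp [hwe])
      have : IsInt (ψ e) := by
        have : ψ e = (∑ e' ∈ univ.filter (fun e' => w' e' = v), ψ e')
            - ∑ e' ∈ (univ.filter (fun e' => w e' = v)).erase e, ψ e' := by
          rw [← hcons v, ← h3]; ring
        rw [this]; exact h1.sub h2
      exact ((hmemN e).mp heN) this
    have hloop : fs e ≠ sn e := hnoloop e ((hmemN e).mp heN)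
    rcases hev with hfe | hse
    · exact key fs sn hfe (fun h => hloop (hfe.trans h.symm)) (fun e' => Iff.rfl) hc
    · exact key sn fs hse (fun h => hloop (h.trans hse.symm)) (fun e' => or_comm) fun u => (hc u).symm
  -- the walk
  have hstart : e₀ ∈ N ∧ (fs e₀ = sn e₀ ∨ sn e₀ = sn e₀) := ⟨(hmemN e₀).mpr he₀, Or.inr rfl⟩
  let g : E × V → E × V := fun p =>
    if h : p.1 ∈ N ∧ (fs p.1 = p.2 ∨ sn p.1 = p.2) then
      let e' := Classical.choose (hdeg2 p.1 p.2 h.1 h.2)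
      (e', if fs e' = p.2 then sn e' else fs e')
    else p
  let W : ℕ → E × V := fun k => g^[k] (e₀, sn e₀)
  let es : ℕ → E := fun k => (W k).1
  let vs : ℕ → V := fun k => (W k).2
  have hinv : ∀ k, es k ∈ N ∧ (fs (es k) = vs k ∨ sn (es k) = vs k) := by
    intro k
    induction k with
    | zero => exact hstart
    | succ k ih =>
      have hW : W (k+1) = g (W k) := Function.iterate_succ_apply' g k _
      have spec := Classical.choose_spec (hdeg2 (W k).1 (W k).2 ih.1 ih.2)
      have hg : g (W k) = (Classical.choose (hdeg2 (W k).1 (W k).2 ih.1 ih.2),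
          if fs (Classical.choose (hdeg2 (W k).1 (W k).2 ih.1 ih.2)) = (W k).2
          then sn (Classical.choose (hdeg2 (W k).1 (W k).2 ih.1 ih.2))
          else fs (Classical.choose (hdeg2 (W k).1 (W k).2 ih.1 ih.2))) := by
        simp only [g]; exact dif_pos ih
      refine ⟨by simp only [es, hW, hg]; exact spec.1, ?_⟩
      simp only [es, vs, hW, hg]
      split
      · exact Or.inr rfl
      · exact Or.inl rfl
  have hstep : ∀ k, es (k+1) ≠ es k ∧
      ((fs (es (k+1)) = vs k ∧ sn (es (k+1)) = vs (k+1)) ∨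
        (sn (es (k+1)) = vs k ∧ fs (es (k+1)) = vs (k+1))) := by
    intro k
    have ih := hinv k
    have hW : W (k+1) = g (W k) := Function.iterate_succ_apply' g k _
    have spec := Classical.choose_spec (hdeg2 (W k).1 (W k).2 ih.1 ih.2)
    have hg : g (W k) = (Classical.choose (hdeg2 (W k).1 (W k).2 ih.1 ih.2),
        if fs (Classical.choose (hdeg2 (W k).1 (W k).2 ih.1 ih.2)) = (W k).2
        then sn (Classical.choose (hdeg2 (W k).1 (W k).2 ih.1 ih.2))
        else fs (Classical.choose (hdeg2 (W k).1 (W k).2 ih.1 ih.2))) := by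
      simp only [g]; exact dif_pos ih
    constructor
    · simp only [es, hW, hg]; exact spec.2.1
    · simp only [es, vs, hW, hg]
      split
      · exact Or.inl ⟨by assumption, rfl⟩
      · rcases spec.2.2 with h | h
        · exact absurd h (by assumption)
        · exact Or.inr ⟨h, rfl⟩
  have hesN : ∀ k, es k ∈ N := fun k => (hinv k).1
  have hesnoloop : ∀ k, fs (es k) ≠ sn (es k) := fun k =>
    hnoloop (es k) ((hmemN (es k)).mp (hesN k))
  have hvne : ∀ k, vs k ≠ vs (k+1) := by
    intro k h
    rcases (hstep k).2 with ⟨h1, h2⟩ | ⟨h1, h2⟩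
    · exact hesnoloop (k+1) (by rw [h1, h2, h])
    · exact hesnoloop (k+1) (by rw [h1, h2, h])
  -- find first repeated vertex
  have hrep : ∃ j, ∃ i, i < j ∧ vs i = vs j := by
    obtain ⟨x, y, hxy, hv⟩ := Finite.exists_ne_map_eq_of_infinite vs
    rcases lt_or_gt_of_ne hxy with h | h
    · exact ⟨y, x, h, hv⟩
    · exact ⟨x, y, h, hv.symm⟩
  let j := Nat.find hrep
  obtain ⟨i, hij, hvij⟩ : ∃ i, i < j ∧ vs i = vs j := Nat.find_spec hrep
  have hinj_lt : ∀ a b, a < b → b < j → vs a ≠ vs b := by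
    intro a b hab hbj h
    exact Nat.find_min hrep hbj ⟨a, hab, h⟩
  have hij2 : i + 1 < j := by
    rcases Nat.lt_or_ge (i+1) j with h | h
    · exact h
    · have : j = i + 1 := by omega
      exact absurd (this ▸ hvij) (hvne i)
  -- cycle indices
  set K : Finset ℕ := Finset.Ico i j with hK
  have hKne : K.Nonempty := ⟨i, by simp [hK]; omega⟩
  have hmemK : ∀ k, k ∈ K ↔ i ≤ k ∧ k < j := by intro k; simp [hK]
  -- injectivity of cycle edges
  have heinj : ∀ k ∈ K, ∀ l ∈ K, es (k+1) = es (l+1) → k = l := by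
    have core : ∀ k l, k < l → l < j → vs (k+1) = vs l →
        es (k+1) = es (l+1) → False := by
      intro k l hkl hlj h1 hel
      rcases Nat.lt_or_ge (k+1) l with h | h
      · exact hinj_lt (k+1) l h hlj h1
      · have hkl1 : l = k + 1 := by omega
        subst hkl1
        exact (hstep (k+1)).1 hel.symm
    have main : ∀ k l, k < l → l < j → es (k+1) = es (l+1) → False := by
      intro k l hkl hlj hel
      rcases (hstep k).2 with ⟨hk1, hk2⟩ | ⟨hk1, hk2⟩ <;>
        rcases (hstep l).2 with ⟨hl1, hl2⟩ | ⟨hl1, hl2⟩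
      · exact hinj_lt k l hkl hlj (hk1.symm.trans (by rw [hel, hl1]))
      · exact core k l hkl hlj (hk2.symm.trans (by rw [hel, hl1])) hel
      · exact core k l hkl hlj (hk2.symm.trans (by rw [hel, hl1])) hel
      · exact hinj_lt k l hkl hlj (hk1.symm.trans (by rw [hel, hl1]))
    intro k hk l hl h
    rcases lt_trichotomy k l with h' | h' | h'
    · exact absurd (main k l h' ((hmemK l).mp hl).2 h) not_false
    · exact h'
    · exact absurd (main l k h' ((hmemK k).mp hk).2 h.symm) not_false
  -- perturbation direction
  let χ : ℕ → ℝ := fun k => if fs (es (k+1)) = vs k then 1 else -1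
  let c : E → ℝ := fun e => ∑ k ∈ K, if es (k+1) = e then χ k else 0
  have hceq : ∀ k ∈ K, c (es (k+1)) = χ k := by
    intro k hk
    refine (Finset.sum_eq_single_of_mem k hk ?_).trans (if_pos rfl)
    intro l hl hlk
    exact if_neg fun h => hlk (heinj l hl k hk h)
  have hczero : ∀ e, (∀ k ∈ K, es (k+1) ≠ e) → c e = 0 := fun e he =>
    Finset.sum_eq_zero fun k hk => if_neg (he k hk)
  -- balance of c
  have hbal : ∀ v, ∑ e ∈ univ.filter (fun e => fs e = v), c e
      = ∑ e ∈ univ.filter (fun e => sn e = v), c e := by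
    intro v
    have hswap : ∀ (w : E → V), ∑ e ∈ univ.filter (fun e => w e = v), c e
        = ∑ k ∈ K, (if w (es (k+1)) = v then χ k else 0) := by
      intro w
      simp only [c]
      rw [Finset.sum_comm]
      refine Finset.sum_congr rfl fun k _ => ?_
      rw [Finset.sum_ite_eq]
      simp [Finset.mem_filter]
    have hdiff : ∀ k ∈ K, (if fs (es (k+1)) = v then χ k else 0)
        - (if sn (es (k+1)) = v then χ k else 0)
        = (if vs k = v then (1:ℝ) else 0) - (if vs (k+1) = v then (1:ℝ) else 0) := by
      intro k _
      rcases (hstep k).2 with ⟨h1, h2⟩ | ⟨h1, h2⟩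
      · have hx : χ k = 1 := if_pos h1
        rw [h1, h2, hx]
      · have hx : χ k = -1 := if_neg (fun h => hvne k (h2.symm.trans h).symm)
        rw [h1, h2, hx]
        by_cases ha : vs k = v <;> by_cases hb' : vs (k+1) = v <;> simp [ha, hb']
    have htel : ∑ k ∈ K, ((if vs k = v then (1:ℝ) else 0)
        - (if vs (k+1) = v then (1:ℝ) else 0)) = 0 := by
      rw [hK, Finset.sum_Ico_eq_sum_range]
      have h2 := Finset.sum_range_sub' (fun m => if vs (i+m) = v then (1:ℝ) else 0) (j - i)
      have hre : ∀ m, i + (m + 1) = i + m + 1 := fun m => rfl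
      rw [show (∑ k ∈ Finset.range (j-i), ((if vs (i+k) = v then (1:ℝ) else 0)
        - (if vs (i+k+1) = v then (1:ℝ) else 0)))
        = ∑ k ∈ Finset.range (j-i), ((fun m => if vs (i+m) = v then (1:ℝ) else 0) k
          - (fun m => if vs (i+m) = v then (1:ℝ) else 0) (k+1)) from rfl, h2]
      show (if vs (i+0) = v then (1:ℝ) else 0) - (if vs (i+(j-i)) = v then (1:ℝ) else 0) = 0
      rw [show i + 0 = i from rfl, show i + (j-i) = j by omega, hvij]
      ring
    have := Finset.sum_congr rfl hdiff
    rw [Finset.sum_sub_distrib] at this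
    rw [hswap fs, hswap sn]
    rw [htel] at this
    linarith [this]
  -- the push amount
  have hfrack : ∀ k, ¬ IsInt (ψ (es k)) := fun k => (hmemN _).mp (hesN k)
  let gap : ℕ → ℝ := fun k => if fs (es (k+1)) = vs k
      then (⌈ψ (es (k+1))⌉ : ℝ) - ψ (es (k+1)) else ψ (es (k+1)) - (⌊ψ (es (k+1))⌋ : ℝ)
  have hgappos : ∀ k, 0 < gap k := by
    intro k
    have hf := hfrack (k+1)
    dsimp only [gap]
    split
    · rcases lt_or_eq_of_le (Int.le_ceil (ψ (es (k+1)))) with h | h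
      · linarith
      · exact absurd ⟨_, h⟩ hf
    · rcases lt_or_eq_of_le (Int.floor_le (ψ (es (k+1)))) with h | h
      · linarith
      · exact absurd ⟨_, h.symm⟩ hf
  obtain ⟨k₀, hk₀K, hk₀min⟩ := K.exists_min_image gap hKne
  set δ : ℝ := gap k₀ with hδ
  have hδpos : 0 < δ := hgappos k₀
  set ψ' : E → ℝ := fun e => ψ e + δ * c e with hψ'
  have hnoncyc : ∀ e, (∀ k ∈ K, es (k+1) ≠ e) → ψ' e = ψ e := by
    intro e he
    simp only [hψ', hczero e he, mul_zero, add_zero]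
  have hcycval : ∀ k ∈ K, ψ' (es (k+1)) = ψ (es (k+1)) + δ * χ k := by
    intro k hk
    simp only [hψ', hceq k hk]
  -- bounds
  have hb' : ∀ e, (lb e : ℝ) ≤ ψ' e ∧ ψ' e ≤ ub e := by
    intro e
    by_cases hcyc : ∃ k ∈ K, es (k+1) = e
    · obtain ⟨k, hk, hek⟩ := hcyc
      subst hek
      rw [hcycval k hk]
      have hδle : δ ≤ gap k := hk₀min k hk
      refine push_bound (hb _).1 (hb _).2 hδpos ?_
      by_cases hfs : fs (es (k+1)) = vs k
      · refine Or.inl ⟨if_pos hfs, ?_⟩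
        have : gap k = (⌈ψ (es (k+1))⌉:ℝ) - ψ (es (k+1)) := if_pos hfs
        rw [this] at hδle; exact hδle
      · refine Or.inr ⟨if_neg hfs, ?_⟩
        have : gap k = ψ (es (k+1)) - (⌊ψ (es (k+1))⌋:ℝ) := if_neg hfs
        rw [this] at hδle; exact hδle
    · push_neg at hcyc
      rw [hnoncyc e hcyc]
      exact hb e
  -- conservation
  have hc' : ∀ v, ∑ e ∈ univ.filter (fun e => fs e = v), ψ' e
      = ∑ e ∈ univ.filter (fun e => sn e = v), ψ' e := fun v =>
    cons_push fs sn ψ hc c δ hbal v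
  -- the distinguished edge becomes integral
  have hk₀int : IsInt (ψ' (es (k₀+1))) := by
    rw [hcycval k₀ hk₀K]
    by_cases hfs : fs (es (k₀+1)) = vs k₀
    · have h1 : χ k₀ = 1 := if_pos hfs
      have h2 : δ = (⌈ψ (es (k₀+1))⌉:ℝ) - ψ (es (k₀+1)) := by
        rw [hδ]; exact if_pos hfs
      rw [h1, h2]; exact ⟨⌈ψ (es (k₀+1))⌉, by ring⟩
    · have h1 : χ k₀ = -1 := if_neg hfs
      have h2 : δ = ψ (es (k₀+1)) - (⌊ψ (es (k₀+1))⌋:ℝ) := by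
        rw [hδ]; exact if_neg hfs
      rw [h1, h2]; exact ⟨⌊ψ (es (k₀+1))⌋, by ring⟩
  -- cardinality decreases
  have hsub : univ.filter (fun e => ¬ IsInt (ψ' e)) ⊆ N.erase (es (k₀+1)) := by
    intro e he
    simp only [mem_filter, mem_univ, true_and] at he
    by_cases hcyc : ∃ k ∈ K, es (k+1) = e
    · obtain ⟨k, hk, hek⟩ := hcyc
      refine Finset.mem_erase.mpr ⟨?_, hek ▸ hesN (k+1)⟩
      intro heq
      exact he (heq ▸ hk₀int)
    · push_neg at hcyc
      refine Finset.mem_erase.mpr ⟨?_, ?_⟩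
      · intro heq
        exact hcyc k₀ hk₀K heq.symm
      · rw [hmemN]
        rw [hnoncyc e hcyc] at he
        exact he
  refine ⟨ψ', hb', hc', ?_⟩
  calc (univ.filter (fun e => ¬ IsInt (ψ' e))).card
      ≤ (N.erase (es (k₀+1))).card := Finset.card_le_card hsub
    _ < N.card := Finset.card_erase_lt_of_mem (hesN (k₀+1))

set_option maxHeartbeats 1000000 in
theorem exists_int_flow (fs sn : E → V) (lb ub : E → ℤ) (ψ0 : E → ℝ)
    (hb0 : ∀ e, (lb e : ℝ) ≤ ψ0 e ∧ ψ0 e ≤ ub e)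
    (hc0 : ∀ v, ∑ e ∈ univ.filter (fun e => fs e = v), ψ0 e
        = ∑ e ∈ univ.filter (fun e => sn e = v), ψ0 e) :
    ∃ ζ : E → ℤ, (∀ e, lb e ≤ ζ e ∧ ζ e ≤ ub e) ∧
      (∀ v, ∑ e ∈ univ.filter (fun e => fs e = v), (ζ e : ℝ)
        = ∑ e ∈ univ.filter (fun e => sn e = v), (ζ e : ℝ)) := by
  classical
  suffices H : ∀ n (ψ : E → ℝ), (univ.filter (fun e => ¬ IsInt (ψ e))).card ≤ n →
      (∀ e, (lb e : ℝ) ≤ ψ e ∧ ψ e ≤ ub e) →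
      (∀ v, ∑ e ∈ univ.filter (fun e => fs e = v), ψ e
        = ∑ e ∈ univ.filter (fun e => sn e = v), ψ e) →
      ∃ ζ : E → ℤ, (∀ e, lb e ≤ ζ e ∧ ζ e ≤ ub e) ∧
      (∀ v, ∑ e ∈ univ.filter (fun e => fs e = v), (ζ e : ℝ)
        = ∑ e ∈ univ.filter (fun e => sn e = v), (ζ e : ℝ)) by
    exact H _ ψ0 le_rfl hb0 hc0
  intro n
  induction n with
  | zero =>
    intro ψ hm hb hc
    have hall : ∀ e, IsInt (ψ e) := by
      intro e
      by_contra he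
      have h1 : e ∈ univ.filter (fun e => ¬ IsInt (ψ e)) := by simp [he]
      have := card_pos.mpr ⟨e, h1⟩
      omega
    refine ⟨fun e => ⌊ψ e⌋, fun e => ?_, fun v => ?_⟩
    · constructor
      · exact Int.le_floor.mpr (hb e).1
      · exact (Int.floor_le_floor (hb e).2).trans_eq (Int.floor_intCast _)
    · have heq : ∀ e, ((⌊ψ e⌋ : ℤ) : ℝ) = ψ e := by
        intro e
        obtain ⟨z, hz⟩ := hall e
        rw [hz]; simp
      simp only [heq]; exact hc v
  | succ n ih =>
    intro ψ hm hb hc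
    rcases Nat.lt_or_ge (univ.filter (fun e => ¬ IsInt (ψ e))).card (n+1) with hlt | hge
    · exact ih ψ (by omega) hb hc
    have hpos : 0 < (univ.filter (fun e => ¬ IsInt (ψ e))).card := by omega
    rcases em (∃ e, ¬ IsInt (ψ e) ∧ fs e = sn e) with ⟨e₀, he₀, hloop⟩ | hnl
    · -- round a fractional loop
      set c : E → ℝ := fun e => if e = e₀ then 1 else 0 with hcdef
      set δ : ℝ := (⌊ψ e₀⌋ : ℝ) - ψ e₀ with hδ
      set ψ' : E → ℝ := fun e => ψ e + δ * c e with hψ'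
      have hbal : ∀ v, ∑ e ∈ univ.filter (fun e => fs e = v), c e
          = ∑ e ∈ univ.filter (fun e => sn e = v), c e := by
        intro v
        rw [hcdef]
        rw [Finset.sum_ite_eq' _ e₀ (fun _ => (1:ℝ)), Finset.sum_ite_eq' _ e₀ (fun _ => (1:ℝ))]
        simp [hloop]
      have hval : ∀ e, e ≠ e₀ → ψ' e = ψ e := by
        intro e he; simp [hψ', hcdef, he]
      have hval0 : ψ' e₀ = (⌊ψ e₀⌋ : ℝ) := by simp [hψ', hcdef, hδ]
      have hb' : ∀ e, (lb e : ℝ) ≤ ψ' e ∧ ψ' e ≤ ub e := by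
        intro e
        by_cases he : e = e₀
        · subst he
          rw [hval0]
          constructor
          · exact_mod_cast Int.le_floor.mpr (hb e).1
          · exact (Int.floor_le _).trans (hb e).2
        · rw [hval e he]; exact hb e
      have hc' := cons_push fs sn ψ hc c δ hbal
      have hsub : univ.filter (fun e => ¬ IsInt (ψ' e))
          ⊆ (univ.filter (fun e => ¬ IsInt (ψ e))).erase e₀ := by
        intro e he
        simp only [mem_filter, mem_univ, true_and] at he
        refine Finset.mem_erase.mpr ⟨?_, ?_⟩
        · rintro rfl
          exact he (hval0 ▸ ⟨⌊ψ e⌋, rfl⟩)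
        · simp only [mem_filter, mem_univ, true_and]
          intro hint
          by_cases h : e = e₀
          · subst h; exact he (hval0 ▸ ⟨⌊ψ e⌋, rfl⟩)
          · exact he (hval e h ▸ hint)
      have hcard : (univ.filter (fun e => ¬ IsInt (ψ' e))).card ≤ n := by
        have h1 := Finset.card_le_card hsub
        have h2 : e₀ ∈ univ.filter (fun e => ¬ IsInt (ψ e)) := by simp [he₀]
        have h3 := Finset.card_erase_lt_of_mem h2
        omega
      exact ih ψ' hcard hb' hc'
    · push_neg at hnl
      obtain ⟨e₀, he₀⟩ := card_pos.mp hpos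
      simp only [mem_filter, mem_univ, true_and] at he₀
      obtain ⟨ψ', hb', hc', hlt'⟩ := reduce_frac fs sn lb ub ψ hb hc hnl e₀ he₀
      exact ih ψ' (by omega) hb' hc'

end NZF

namespace NZF2
open Finset

attribute [local instance] Classical.propDecidable

variable {E V : Type} [Fintype E] [DecidableEq E] [DecidableEq V]

set_option maxHeartbeats 1000000 in
theorem analyze (t : ℕ) (ht : 1 ≤ t) (fs sn : E → V)
    (hdeg : ∀ v, (univ.filter (fun e => fs e = v)).card
      + (univ.filter (fun e => sn e = v)).card = 2*t+1)
    (ζ : E → ℤ)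
    (habs : ∀ e, (2*(t:ℤ)-1) ≤ |ζ e| ∧ |ζ e| ≤ 2*(t:ℤ)+1)
    (hcons : ∀ v, ∑ e ∈ univ.filter (fun e => fs e = v), ζ e
        = ∑ e ∈ univ.filter (fun e => sn e = v), ζ e) :
    ∃ (F : Set E) (c : V → Bool),
      (∀ e ∈ F, fs e ≠ sn e) ∧
      (∀ v, ∃! e, e ∈ F ∧ (fs e = v ∨ sn e = v)) ∧
      (∀ e ∉ F, c (fs e) ≠ c (sn e)) := by
  classical
  have htz : (1:ℤ) ≤ (t:ℤ) := by exact_mod_cast ht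
  have hζpos : ∀ e, ζ e ≠ 0 := by
    intro e h
    have h1 := (habs e).1
    rw [h, abs_zero] at h1
    omega
  set P : V → Finset E := fun v => univ.filter (fun e =>
      (fs e = v ∧ ¬ sn e = v ∧ 0 < ζ e) ∨ (sn e = v ∧ ¬ fs e = v ∧ ζ e < 0)) with hP
  set Q : V → Finset E := fun v => univ.filter (fun e =>
      (fs e = v ∧ ¬ sn e = v ∧ ζ e < 0) ∨ (sn e = v ∧ ¬ fs e = v ∧ 0 < ζ e)) with hQ
  -- sum identity
  have hS : ∀ v, ∑ e ∈ P v, |ζ e| = ∑ e ∈ Q v, |ζ e| := by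
    intro v
    have hpt : ∀ e : E, (if (fs e = v ∧ ¬ sn e = v ∧ 0 < ζ e) ∨ (sn e = v ∧ ¬ fs e = v ∧ ζ e < 0)
          then |ζ e| else 0)
        - (if (fs e = v ∧ ¬ sn e = v ∧ ζ e < 0) ∨ (sn e = v ∧ ¬ fs e = v ∧ 0 < ζ e)
          then |ζ e| else 0)
        = (if fs e = v then ζ e else 0) - (if sn e = v then ζ e else 0) := by
      intro e
      have h0 := hζpos e
      by_cases h1 : fs e = v <;> by_cases h2 : sn e = v <;>
        rcases lt_trichotomy (ζ e) 0 with h3 | h3 | h3 <;>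
        simp [h1, h2, h3, abs_of_pos, abs_of_neg, h3.le] <;> omega
    have h1 : ∑ e ∈ P v, |ζ e| - ∑ e ∈ Q v, |ζ e|
        = ∑ e ∈ univ.filter (fun e => fs e = v), ζ e
          - ∑ e ∈ univ.filter (fun e => sn e = v), ζ e := by
      rw [hP, hQ]
      rw [Finset.sum_filter, Finset.sum_filter, Finset.sum_filter, Finset.sum_filter]
      rw [← Finset.sum_sub_distrib, ← Finset.sum_sub_distrib]
      exact Finset.sum_congr rfl fun e _ => hpt e
    have h2 := hcons v
    omega
  -- cardinality identity
  have hcard : ∀ v, (P v).card + (Q v).card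
      + 2 * (univ.filter (fun e => fs e = v ∧ sn e = v)).card = 2*t+1 := by
    intro v
    have hpt : ∀ e : E, ((if (fs e = v ∧ ¬ sn e = v ∧ 0 < ζ e) ∨ (sn e = v ∧ ¬ fs e = v ∧ ζ e < 0)
          then 1 else 0) : ℕ)
        + (if (fs e = v ∧ ¬ sn e = v ∧ ζ e < 0) ∨ (sn e = v ∧ ¬ fs e = v ∧ 0 < ζ e)
          then 1 else 0)
        + 2 * (if fs e = v ∧ sn e = v then 1 else 0)
        = (if fs e = v then 1 else 0) + (if sn e = v then 1 else 0) := by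
      intro e
      have h0 := hζpos e
      by_cases h1 : fs e = v <;> by_cases h2 : sn e = v <;>
        rcases lt_trichotomy (ζ e) 0 with h3 | h3 | h3 <;>
        simp [h1, h2, h3] <;> omega
    have h1 := hdeg v
    rw [Finset.card_filter, Finset.card_filter] at h1
    rw [hP, hQ, Finset.card_filter, Finset.card_filter, Finset.card_filter]
    rw [← Finset.sum_add_distrib, Finset.mul_sum, ← Finset.sum_add_distrib]
    rw [← h1, ← Finset.sum_add_distrib]
    exact Finset.sum_congr rfl fun e _ => hpt e
  -- sum bounds
  have hsum_lb : ∀ (s : Finset E), ((s.card : ℤ)) * (2*(t:ℤ)-1) ≤ ∑ e ∈ s, |ζ e| := by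
    intro s
    calc ((s.card : ℤ)) * (2*(t:ℤ)-1) = ∑ _e ∈ s, (2*(t:ℤ)-1) := by
          rw [Finset.sum_const, nsmul_eq_mul]
      _ ≤ ∑ e ∈ s, |ζ e| := Finset.sum_le_sum fun e _ => (habs e).1
  have hsum_ub : ∀ (s : Finset E), ∑ e ∈ s, |ζ e| ≤ ((s.card : ℤ)) * (2*(t:ℤ)+1) := by
    intro s
    calc ∑ e ∈ s, |ζ e| ≤ ∑ _e ∈ s, (2*(t:ℤ)+1) := Finset.sum_le_sum fun e _ => (habs e).2
      _ = ((s.card : ℤ)) * (2*(t:ℤ)+1) := by rw [Finset.sum_const, nsmul_eq_mul]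
  -- main per-vertex cardinalities and no loops
  have key : ∀ v, (univ.filter (fun e => fs e = v ∧ sn e = v)).card = 0 ∧
      (((P v).card = t+1 ∧ (Q v).card = t) ∨ ((P v).card = t ∧ (Q v).card = t+1)) := by
    intro v
    have h1 : ((P v).card : ℤ) * (2*(t:ℤ)-1) ≤ ((Q v).card : ℤ) * (2*(t:ℤ)+1) :=
      le_trans (le_trans (hsum_lb (P v)) (le_of_eq (hS v))) (hsum_ub (Q v))
    have h2 : ((Q v).card : ℤ) * (2*(t:ℤ)-1) ≤ ((P v).card : ℤ) * (2*(t:ℤ)+1) :=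
      le_trans (le_trans (hsum_lb (Q v)) (le_of_eq (hS v).symm)) (hsum_ub (P v))
    have h3 := hcard v
    set p := ((P v).card : ℤ) with hp
    set q := ((Q v).card : ℤ) with hq
    set l := ((univ.filter (fun e => fs e = v ∧ sn e = v)).card : ℤ) with hl
    have h3' : p + q + 2*l = 2*(t:ℤ)+1 := by rw [hp, hq, hl]; exact_mod_cast h3
    have hd1 : 2*(t:ℤ)*(p - q) ≤ p + q := by nlinarith
    have hd2 : 2*(t:ℤ)*(q - p) ≤ p + q := by nlinarith
    have hpq : p ≠ q := by
      intro h
      rw [h] at h3'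
      omega
    have hl0 : l = 0 ∧ (p - q = 1 ∨ q - p = 1) := by
      rcases lt_or_gt_of_ne hpq with h | h
      · have hd : 1 ≤ q - p := by omega
        have : 2*(t:ℤ) * 1 ≤ 2*(t:ℤ)*(q-p) := by nlinarith
        constructor
        · nlinarith
        · right
          by_contra hc
          have : 2 ≤ q - p := by omega
          nlinarith
      · have hd : 1 ≤ p - q := by omega
        have : 2*(t:ℤ) * 1 ≤ 2*(t:ℤ)*(p-q) := by nlinarith
        constructor
        · nlinarith
        · left
          by_contra hc
          have : 2 ≤ p - q := by omega
          nlinarith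
    constructor
    · omega
    · rcases hl0.2 with h | h
      · left; constructor <;> omega
      · right; constructor <;> omega
  have hnoloop : ∀ e, fs e ≠ sn e := by
    intro e h
    have h1 := (key (sn e)).1
    have : e ∈ univ.filter (fun e' => fs e' = sn e ∧ sn e' = sn e) := by simp [h]
    have := Finset.card_pos.mpr ⟨e, this⟩
    omega
  -- budget extraction
  have extract : ∀ (A B : Finset E), Disjoint A B → A.card = t+1 → B.card = t →
      (∑ e ∈ A, |ζ e|) = (∑ e ∈ B, |ζ e|) →
      (∀ e ∈ A, |ζ e| ≤ 2*(t:ℤ)) ∧ (∀ e ∈ B, 2*(t:ℤ) ≤ |ζ e|) ∧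
      (∃! e, e ∈ A ∪ B ∧ |ζ e| = 2*(t:ℤ)) := by
    intro A B hdis hA hB hSS
    set τ : E → ℤ := fun e => if e ∈ A then |ζ e| - (2*(t:ℤ)-1) else (2*(t:ℤ)+1) - |ζ e| with hτ
    have hτnn : ∀ e, 0 ≤ τ e := by
      intro e
      rw [hτ]
      dsimp only
      split
      · linarith [(habs e).1]
      · linarith [(habs e).2]
    have hbud : ∑ e ∈ A ∪ B, τ e = 1 := by
      rw [Finset.sum_union hdis]
      have hA' : ∑ e ∈ A, τ e = ∑ e ∈ A, (|ζ e| - (2*(t:ℤ)-1)) :=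
        Finset.sum_congr rfl fun e he => by rw [hτ]; simp [he]
      have hB' : ∑ e ∈ B, τ e = ∑ e ∈ B, ((2*(t:ℤ)+1) - |ζ e|) :=
        Finset.sum_congr rfl fun e he => by
          rw [hτ]
          have : e ∉ A := fun h => (Finset.disjoint_left.mp hdis h) he
          simp [this]
      have e1 : ∑ e ∈ A, (|ζ e| - (2*(t:ℤ)-1))
          = (∑ e ∈ B, |ζ e|) - ((t:ℤ)+1) * (2*(t:ℤ)-1) := by
        rw [Finset.sum_sub_distrib, Finset.sum_const, hA, hSS, nsmul_eq_mul]
        push_cast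
        ring
      have e2 : ∑ e ∈ B, ((2*(t:ℤ)+1) - |ζ e|)
          = (t:ℤ) * (2*(t:ℤ)+1) - (∑ e ∈ B, |ζ e|) := by
        rw [Finset.sum_sub_distrib, Finset.sum_const, hB, nsmul_eq_mul]
      rw [hA', hB', e1, e2]
      ring
    have hle1 : ∀ e ∈ A ∪ B, τ e ≤ 1 := by
      intro e he
      rw [← hbud]
      exact Finset.single_le_sum (fun e' _ => hτnn e') he
    have hmid : ∀ e ∈ A ∪ B, (|ζ e| = 2*(t:ℤ) ↔ τ e = 1) := by
      intro e he
      have h1 := hle1 e he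
      have h2 := hτnn e
      rw [hτ] at h1 h2 ⊢
      dsimp only at h1 h2 ⊢
      split at h1 <;> split <;> simp_all <;> omega
    refine ⟨?_, ?_, ?_⟩
    · intro e he
      have := hle1 e (Finset.mem_union_left _ he)
      rw [hτ] at this
      simp only [he, if_pos] at this
      omega
    · intro e he
      have he' : e ∉ A := fun h => (Finset.disjoint_left.mp hdis h) he
      have := hle1 e (Finset.mem_union_right _ he)
      rw [hτ] at this
      simp only [he', if_neg, ite_false] at this
      omega
    · -- existence
      have hex : ∃ e ∈ A ∪ B, τ e = 1 := by
        by_contra hno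
        push_neg at hno
        have : ∑ e ∈ A ∪ B, τ e = 0 := Finset.sum_eq_zero fun e he => by
          have h1 := hle1 e he
          have h2 := hτnn e
          have h3 := hno e he
          omega
        omega
      obtain ⟨e₁, he₁, hτ₁⟩ := hex
      refine ⟨e₁, ⟨he₁, (hmid e₁ he₁).mpr hτ₁⟩, ?_⟩
      rintro e₂ ⟨he₂, hm₂⟩
      by_contra hne
      have hτ₂ := (hmid e₂ he₂).mp hm₂
      have : 2 ≤ ∑ e ∈ A ∪ B, τ e := by
        have hsub : {e₂, e₁} ⊆ A ∪ B := by
          intro x hx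
          rcases Finset.mem_insert.mp hx with rfl | hx
          · exact he₂
          · rw [Finset.mem_singleton.mp hx]; exact he₁
        calc (2:ℤ) = ∑ e ∈ ({e₂, e₁} : Finset E), τ e := by
              rw [Finset.sum_pair hne]; omega
          _ ≤ ∑ e ∈ A ∪ B, τ e :=
              Finset.sum_le_sum_of_subset_of_nonneg hsub fun e _ _ => hτnn e
      omega
  -- per-vertex conclusions
  have hPQdis : ∀ v, Disjoint (P v) (Q v) := by
    intro v
    rw [Finset.disjoint_left]
    intro e heP heQ
    rw [hP] at heP
    rw [hQ] at heQ
    simp only [mem_filter, mem_univ, true_and] at heP heQ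
    rcases heP with ⟨h1, h2, h3⟩ | ⟨h1, h2, h3⟩ <;> rcases heQ with ⟨g1, g2, g3⟩ | ⟨g1, g2, g3⟩ <;>
      first | omega | exact absurd h1 g2 | exact absurd g1 h2
  have vertexfacts : ∀ v,
      (((P v).card = t+1 → (∀ e ∈ P v, |ζ e| ≤ 2*(t:ℤ)) ∧ (∀ e ∈ Q v, 2*(t:ℤ) ≤ |ζ e|)) ∧
       ((P v).card = t → (∀ e ∈ Q v, |ζ e| ≤ 2*(t:ℤ)) ∧ (∀ e ∈ P v, 2*(t:ℤ) ≤ |ζ e|)) ∧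
       (∃! e, e ∈ P v ∪ Q v ∧ |ζ e| = 2*(t:ℤ))) ∧
      ((P v).card = t+1 ∨ (P v).card = t) := by
    intro v
    rcases (key v).2 with ⟨hp, hq⟩ | ⟨hp, hq⟩
    · obtain ⟨e1, e2, e3⟩ := extract (P v) (Q v) (hPQdis v) hp hq (hS v)
      refine ⟨⟨fun _ => ⟨e1, e2⟩, fun h => absurd (hp.symm.trans h) (by omega), e3⟩, Or.inl hp⟩
    · obtain ⟨e1, e2, e3⟩ := extract (Q v) (P v) (hPQdis v).symm hq hp (hS v).symm
      refine ⟨⟨fun h => absurd (hp.symm.trans h) (by omega), fun _ => ⟨e1, e2⟩, ?_⟩, Or.inr hp⟩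
      rwa [Finset.union_comm] at e3
  -- incidence characterisation
  have hincid : ∀ v e, (fs e = v ∨ sn e = v) ↔ e ∈ P v ∪ Q v := by
    intro v e
    constructor
    · intro h
      have hnl : ¬ (fs e = v ∧ sn e = v) := by
        intro ⟨a, b⟩; exact hnoloop e (a.trans b.symm)
      rw [Finset.mem_union, hP, hQ]
      simp only [mem_filter, mem_univ, true_and]
      rcases lt_trichotomy (ζ e) 0 with h3 | h3 | h3
      · rcases h with h | h
        · exact Or.inr (Or.inl ⟨h, fun hh => hnl ⟨h, hh⟩, h3⟩)
        · exact Or.inl (Or.inr ⟨h, fun hh => hnl ⟨hh, h⟩, h3⟩)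
      · exact absurd h3 (hζpos e)
      · rcases h with h | h
        · exact Or.inl (Or.inl ⟨h, fun hh => hnl ⟨h, hh⟩, h3⟩)
        · exact Or.inr (Or.inr ⟨h, fun hh => hnl ⟨hh, h⟩, h3⟩)
    · intro h
      rw [Finset.mem_union, hP, hQ] at h
      simp only [mem_filter, mem_univ, true_and] at h
      rcases h with (⟨h, _⟩ | ⟨h, _⟩) | (⟨h, _⟩ | ⟨h, _⟩)
      · exact Or.inl h
      · exact Or.inr h
      · exact Or.inl h
      · exact Or.inr h
  -- the one-factor and colouring
  refine ⟨{e | |ζ e| = 2*(t:ℤ)}, fun v => decide ((P v).card = t+1), ?_, ?_, ?_⟩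
  · intro e _
    exact hnoloop e
  · intro v
    obtain ⟨⟨_, _, hex⟩, _⟩ := vertexfacts v
    obtain ⟨e₁, ⟨he₁, hm₁⟩, huni⟩ := hex
    refine ⟨e₁, ⟨hm₁, (hincid v e₁).mpr he₁⟩, ?_⟩
    rintro e₂ ⟨hm₂, hi₂⟩
    exact huni e₂ ⟨(hincid v e₂).mp hi₂, hm₂⟩
  · intro e heF
    simp only [Set.mem_setOf_eq] at heF
    have habs' := habs e
    have hval : |ζ e| = 2*(t:ℤ)-1 ∨ |ζ e| = 2*(t:ℤ)+1 := by omega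
    have hne := hnoloop e
    -- membership of e at its endpoints
    have hu : (0 < ζ e → e ∈ P (fs e) ∧ e ∈ Q (sn e)) ∧
        (ζ e < 0 → e ∈ Q (fs e) ∧ e ∈ P (sn e)) := by
      constructor <;> intro h3 <;> constructor
      · exact Finset.mem_filter.mpr ⟨Finset.mem_univ e, Or.inl ⟨rfl, fun hh => hne hh.symm, h3⟩⟩
      · exact Finset.mem_filter.mpr ⟨Finset.mem_univ e, Or.inr ⟨rfl, fun hh => hne hh, h3⟩⟩
      · exact Finset.mem_filter.mpr ⟨Finset.mem_univ e, Or.inl ⟨rfl, fun hh => hne hh.symm, h3⟩⟩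
      · exact Finset.mem_filter.mpr ⟨Finset.mem_univ e, Or.inr ⟨rfl, fun hh => hne hh, h3⟩⟩
    -- helper: at a vertex, conclude colour from membership and value
    have hcolP : ∀ v, e ∈ P v → (|ζ e| = 2*(t:ℤ)-1 → (P v).card = t+1) ∧
        (|ζ e| = 2*(t:ℤ)+1 → (P v).card = t) := by
      intro v hev
      obtain ⟨⟨f1, f2, _⟩, fc⟩ := vertexfacts v
      constructor <;> intro hv
      · rcases fc with h | h
        · exact h
        · have := (f2 h).2 e hev
          omega
      · rcases fc with h | h
        · have := (f1 h).1 e hev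
          omega
        · exact h
    have hcolQ : ∀ v, e ∈ Q v → (|ζ e| = 2*(t:ℤ)-1 → (P v).card = t) ∧
        (|ζ e| = 2*(t:ℤ)+1 → (P v).card = t+1) := by
      intro v hev
      obtain ⟨⟨f1, f2, _⟩, fc⟩ := vertexfacts v
      constructor <;> intro hv
      · rcases fc with h | h
        · have := (f1 h).2 e hev
          omega
        · exact h
      · rcases fc with h | h
        · exact h
        · have := (f2 h).1 e hev
          omega
    have hcardne : ∀ v, (P v).card = t+1 → (P v).card = t → False := fun v h1 h2 => by omega
    rcases lt_trichotomy (ζ e) 0 with h3 | h3 | h3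
    · obtain ⟨heQ, heP⟩ := hu.2 h3
      rcases hval with hv | hv
      · have h4 := (hcolQ _ heQ).1 hv
        have h5 := (hcolP _ heP).1 hv
        simp only [ne_eq, decide_eq_decide]
        intro hh
        exact hcardne _ (hh.mpr h5) h4
      · have h4 := (hcolQ _ heQ).2 hv
        have h5 := (hcolP _ heP).2 hv
        simp only [ne_eq, decide_eq_decide]
        intro hh
        exact hcardne _ (hh.mp h4) h5
    · exact absurd h3 (hζpos e)
    · obtain ⟨heP, heQ⟩ := hu.1 h3
      rcases hval with hv | hv
      · have h4 := (hcolP _ heP).1 hv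
        have h5 := (hcolQ _ heQ).1 hv
        simp only [ne_eq, decide_eq_decide]
        intro hh
        exact hcardne _ (hh.mp h4) h5
      · have h4 := (hcolP _ heP).2 hv
        have h5 := (hcolQ _ heQ).2 hv
        simp only [ne_eq, decide_eq_decide]
        intro hh
        exact hcardne _ (hh.mpr h5) h4

end NZF2

namespace NZF3
open Finset

attribute [local instance] Classical.propDecidable

variable {E V : Type} [Fintype E] [Fintype V] [DecidableEq E] [DecidableEq V]

set_option maxHeartbeats 1600000 in
theorem construct (t : ℕ) (ht : 1 ≤ t) (fs sn : E → V)
    (hdeg : ∀ v, (univ.filter (fun e => fs e = v)).card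
      + (univ.filter (fun e => sn e = v)).card = 2*t+1)
    (F : Set E)
    (hF1 : ∀ e ∈ F, fs e ≠ sn e)
    (hF2 : ∀ v, ∃! e, e ∈ F ∧ (fs e = v ∨ sn e = v))
    (c : V → Bool)
    (hc : ∀ e ∉ F, c (fs e) ≠ c (sn e)) :
    ∃ φ : E → ℝ, (∀ e, 1 ≤ |φ e| ∧ |φ e| ≤ (2*(t:ℝ)+1)/(2*(t:ℝ)-1)) ∧
      (∀ v, ∑ e ∈ univ.filter (fun e => fs e = v), φ e
        = ∑ e ∈ univ.filter (fun e => sn e = v), φ e) := by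
  classical
  have hnl : ∀ e, fs e ≠ sn e := by
    intro e
    by_cases he : e ∈ F
    · exact hF1 e he
    · intro h
      exact hc e he (congrArg c h)
  -- incident edges
  set inc : V → Finset E := fun v => univ.filter (fun e => fs e = v ∨ sn e = v) with hinc
  have hinccard : ∀ v, (inc v).card = 2*t+1 := by
    intro v
    rw [hinc]
    have hpt : ∀ e : E, ((if fs e = v ∨ sn e = v then 1 else 0) : ℕ)
        = (if fs e = v then 1 else 0) + (if sn e = v then 1 else 0) := by
      intro e
      have := hnl e
      by_cases h1 : fs e = v <;> by_cases h2 : sn e = v <;> simp [h1, h2] <;>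
        exact absurd (h1.trans h2.symm) this
    rw [Finset.card_filter]
    rw [show ∑ e : E, ((if fs e = v ∨ sn e = v then 1 else 0) : ℕ)
      = ∑ e : E, ((if fs e = v then 1 else 0) + (if sn e = v then 1 else 0)) from
      Finset.sum_congr rfl fun e _ => hpt e]
    rw [Finset.sum_add_distrib, ← Finset.card_filter, ← Finset.card_filter]
    exact hdeg v
  -- the F-edge at each vertex
  have hFone : ∀ v, ((inc v).filter (fun e => e ∈ F)).card = 1 := by
    intro v
    obtain ⟨e₁, ⟨he₁F, he₁i⟩, hu⟩ := hF2 v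
    rw [Finset.card_eq_one]
    refine ⟨e₁, ?_⟩
    ext e
    simp only [Finset.mem_filter, Finset.mem_singleton, hinc, mem_univ, true_and]
    constructor
    · rintro ⟨hi, hF⟩
      exact hu e ⟨hF, hi⟩
    · rintro rfl
      exact ⟨he₁i, he₁F⟩
  have hHcard : ∀ v, ((inc v).filter (fun e => e ∉ F)).card = 2*t := by
    intro v
    have := Finset.card_filter_add_card_filter_not (s := inc v)
      (p := fun e => e ∈ F)
    rw [hFone v, hinccard v] at this
    omega
  -- nonF edges and fibres over the true endpoint
  set nonF : Finset E := univ.filter (fun e => e ∉ F) with hnonF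
  have hfibre : ∀ (b : Bool), nonF.card = 2*t * (univ.filter (fun v => c v = b)).card := by
    intro b
    set tEnd : E → V := fun e => if c (fs e) = b then fs e else sn e with htEnd
    have hmap : ∀ e ∈ nonF, tEnd e ∈ univ.filter (fun v => c v = b) := by
      intro e he
      rw [hnonF] at he
      simp only [mem_filter, mem_univ, true_and] at he
      have := hc e he
      rw [htEnd]
      simp only [mem_filter, mem_univ, true_and]
      by_cases h : c (fs e) = b
      · simpa [h] using h
      · simp only [h, if_false]
        cases hb : c (fs e) <;> cases hb' : c (sn e) <;> cases b <;> simp_all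
    rw [Finset.card_eq_sum_card_fiberwise hmap]
    rw [show 2*t * (univ.filter (fun v => c v = b)).card
      = ∑ _v ∈ univ.filter (fun v => c v = b), 2*t from by
        rw [Finset.sum_const, smul_eq_mul, mul_comm]]
    refine Finset.sum_congr rfl fun v hv => ?_
    simp only [mem_filter, mem_univ, true_and] at hv
    rw [← hHcard v]
    congr 1
    ext e
    simp only [Finset.mem_filter, hnonF, hinc, mem_univ, true_and, htEnd]
    constructor
    · rintro ⟨heF, hev⟩
      by_cases h : c (fs e) = b
      · rw [if_pos h] at hev
        exact ⟨Or.inl hev, heF⟩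
      · rw [if_neg h] at hev
        exact ⟨Or.inr hev, heF⟩
    · rintro ⟨hev, heF⟩
      refine ⟨heF, ?_⟩
      have hcc := hc e heF
      rcases hev with h | h
      · rw [h] at hcc ⊢
        rw [if_pos hv]
      · rw [h] at hcc
        have hnb : ¬ (c (fs e) = b) := by rw [← hv]; exact hcc
        rw [h, if_neg hnb]
  have hAB : (univ.filter (fun v => c v = true)).card
      = (univ.filter (fun v => c v = false)).card := by
    have h1 := hfibre true
    have h2 := hfibre false
    have ht' : 0 < 2*t := by omega
    have := h1.symm.trans h2
    exact Nat.eq_of_mul_eq_mul_left ht' this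
  -- edge count
  have hE2 : 2 * (univ : Finset E).card = (2*t+1) * (univ : Finset V).card := by
    have h1 : ∀ (w : E → V), (univ : Finset E).card
        = ∑ v : V, (univ.filter (fun e => w e = v)).card := fun w =>
      Finset.card_eq_sum_card_fiberwise (fun e _ => mem_univ (w e))
    calc 2 * (univ : Finset E).card
        = (∑ v : V, (univ.filter (fun e => fs e = v)).card)
          + ∑ v : V, (univ.filter (fun e => sn e = v)).card := by
          rw [← h1 fs, ← h1 sn]; ring
      _ = ∑ v : V, ((univ.filter (fun e => fs e = v)).card
          + (univ.filter (fun e => sn e = v)).card) := by rw [Finset.sum_add_distrib]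
      _ = ∑ _v : V, (2*t+1) := Finset.sum_congr rfl fun v _ => hdeg v
      _ = (2*t+1) * (univ : Finset V).card := by rw [Finset.sum_const, smul_eq_mul, mul_comm]
  set cap : V → ℕ := fun v => if c v then t+1 else t with hcap
  have hsumcap : ∑ v : V, cap v = (univ : Finset E).card := by
    have h1 : ∑ v : V, cap v = t * (univ : Finset V).card
        + (univ.filter (fun v => c v = true)).card := by
      rw [hcap]
      have hpt : ∀ v : V, (if c v then t+1 else t) = t + (if c v = true then 1 else 0) := by
        intro v; by_cases h : c v <;> simp [h]
      rw [Finset.sum_congr rfl fun v _ => hpt v, Finset.sum_add_distrib, Finset.sum_const,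
        smul_eq_mul, mul_comm, ← Finset.card_filter]
    have h2 : (univ : Finset V).card = (univ.filter (fun v => c v = true)).card
        + (univ.filter (fun v => c v = false)).card := by
      rw [← Finset.card_filter_add_card_filter_not (s := univ)
        (p := fun v => c v = true)]
      congr 1
      apply Finset.card_nbij' id id <;> intro a ha <;> simp_all
    -- 2 * lhs = 2 * rhs
    have h3 : 2 * (∑ v : V, cap v) = 2 * (univ : Finset E).card := by
      rw [h1, hE2, h2]
      have := hAB
      set a := (univ.filter (fun v => c v = true)).card
      set b := (univ.filter (fun v => c v = false)).card
      ring_nf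
      nlinarith [hAB]
    omega
  -- Hall's theorem setup
  set slot : V → Finset (V × ℕ) := fun v => ({v} : Finset V) ×ˢ Finset.range (cap v)
    with hslot
  have hslotcard : ∀ v, (slot v).card = cap v := by
    intro v
    rw [hslot]
    rw [Finset.card_product, Finset.card_singleton, Finset.card_range, one_mul]
  have hslotmem : ∀ v (x : V × ℕ), x ∈ slot v ↔ x.1 = v ∧ x.2 < cap v := by
    intro v x
    rw [hslot]
    rw [Finset.mem_product, Finset.mem_singleton, Finset.mem_range]
  set fE : E → Finset (V × ℕ) := fun e => slot (fs e) ∪ slot (sn e) with hfE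
  have hall : ∀ S : Finset E, S.card ≤ (S.biUnion fE).card := by
    intro S
    set W : Finset V := S.biUnion (fun e => {fs e, sn e}) with hW
    have hWmem : ∀ v, v ∈ W ↔ ∃ e ∈ S, fs e = v ∨ sn e = v := by
      intro v
      rw [hW]
      simp only [Finset.mem_biUnion, Finset.mem_insert, Finset.mem_singleton]
      constructor
      · rintro ⟨e, he, h | h⟩
        · exact ⟨e, he, Or.inl h.symm⟩
        · exact ⟨e, he, Or.inr h.symm⟩
      · rintro ⟨e, he, h | h⟩
        · exact ⟨e, he, Or.inl h.symm⟩
        · exact ⟨e, he, Or.inr h.symm⟩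
    have hbieq : S.biUnion fE = W.biUnion slot := by
      ext x
      simp only [Finset.mem_biUnion, hfE, Finset.mem_union]
      constructor
      · rintro ⟨e, he, h | h⟩
        · exact ⟨fs e, (hWmem _).mpr ⟨e, he, Or.inl rfl⟩, h⟩
        · exact ⟨sn e, (hWmem _).mpr ⟨e, he, Or.inr rfl⟩, h⟩
      · rintro ⟨v, hv, hx⟩
        obtain ⟨e, he, hev⟩ := (hWmem v).mp hv
        rcases hev with h | h
        · exact ⟨e, he, Or.inl (h ▸ hx)⟩
        · exact ⟨e, he, Or.inr (h ▸ hx)⟩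
    have hWcard : (W.biUnion slot).card = ∑ v ∈ W, cap v := by
      rw [Finset.card_biUnion]
      · exact Finset.sum_congr rfl fun v _ => hslotcard v
      · intro v₁ h₁ v₂ h₂ hne
        rw [Function.onFun, Finset.disjoint_left]
        intro x hx₁ hx₂
        rw [hslotmem] at hx₁ hx₂
        exact hne (hx₁.1.symm.trans hx₂.1)
    have hsumW : ∑ v ∈ W, cap v = t * W.card + (W.filter (fun v => c v = true)).card := by
      rw [hcap]
      have hpt : ∀ v, (if c v then t+1 else t) = t + (if c v = true then 1 else 0) := by
        intro v; by_cases h : c v <;> simp [h]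
      rw [Finset.sum_congr rfl fun v _ => hpt v, Finset.sum_add_distrib, Finset.sum_const,
        smul_eq_mul, mul_comm, ← Finset.card_filter]
    -- F edges in S
    have hSF : 2 * (S.filter (fun e => e ∈ F)).card ≤ W.card := by
      set SF := S.filter (fun e => e ∈ F) with hSFd
      have hsub : SF.biUnion (fun e => {fs e, sn e}) ⊆ W := by
        rw [hW]
        exact Finset.biUnion_subset_biUnion_of_subset_left _ (Finset.filter_subset _ _)
      have hdisj : ∀ e₁ ∈ SF, ∀ e₂ ∈ SF, e₁ ≠ e₂ →
          Disjoint ({fs e₁, sn e₁} : Finset V) {fs e₂, sn e₂} := by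
        intro e₁ h₁ e₂ h₂ hne
        rw [hSFd] at h₁ h₂
        simp only [mem_filter] at h₁ h₂
        rw [Finset.disjoint_left]
        intro v hv₁ hv₂
        simp only [Finset.mem_insert, Finset.mem_singleton] at hv₁ hv₂
        obtain ⟨eu, _, hu⟩ := hF2 v
        have h₁' : e₁ = eu := hu e₁ ⟨h₁.2, by tauto⟩
        have h₂' : e₂ = eu := hu e₂ ⟨h₂.2, by tauto⟩
        exact hne (h₁'.trans h₂'.symm)
      have hcnt : (SF.biUnion (fun e => {fs e, sn e})).card = 2 * SF.card := by
        rw [Finset.card_biUnion hdisj]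
        rw [show ∑ e ∈ SF, ({fs e, sn e} : Finset V).card = ∑ _e ∈ SF, 2 from
          Finset.sum_congr rfl fun e _ => by
            rw [Finset.card_insert_of_notMem (by simp [hnl e]), Finset.card_singleton]]
        rw [Finset.sum_const, smul_eq_mul, mul_comm]
      calc 2 * SF.card = (SF.biUnion (fun e => {fs e, sn e})).card := hcnt.symm
        _ ≤ W.card := Finset.card_le_card hsub
    -- non-F edges in S
    have hSH : ∀ b : Bool, (S.filter (fun e => e ∉ F)).card
        ≤ 2*t * (W.filter (fun v => c v = b)).card := by
      intro b
      set SH := S.filter (fun e => e ∉ F) with hSHd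
      have hsub : SH ⊆ (W.filter (fun v => c v = b)).biUnion
          (fun v => (inc v).filter (fun e => e ∉ F)) := by
        intro e he
        rw [hSHd] at he
        simp only [mem_filter] at he
        obtain ⟨heS, heF⟩ := he
        have hcc := hc e heF
        have hend : ∃ v, (fs e = v ∨ sn e = v) ∧ c v = b := by
          by_cases h : c (fs e) = b
          · exact ⟨fs e, Or.inl rfl, h⟩
          · refine ⟨sn e, Or.inr rfl, ?_⟩
            cases hb : c (fs e) <;> cases hb' : c (sn e) <;> cases b <;> simp_all
        obtain ⟨v, hev, hvb⟩ := hend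
        rw [Finset.mem_biUnion]
        refine ⟨v, ?_, ?_⟩
        · simp only [mem_filter]
          exact ⟨(hWmem v).mpr ⟨e, heS, hev⟩, hvb⟩
        · simp only [mem_filter, hinc, mem_univ, true_and]
          exact ⟨hev, heF⟩
      calc SH.card ≤ ((W.filter (fun v => c v = b)).biUnion
            (fun v => (inc v).filter (fun e => e ∉ F))).card := Finset.card_le_card hsub
        _ ≤ ∑ v ∈ W.filter (fun v => c v = b), ((inc v).filter (fun e => e ∉ F)).card :=
            Finset.card_biUnion_le
        _ = ∑ _v ∈ W.filter (fun v => c v = b), 2*t :=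
            Finset.sum_congr rfl fun v _ => hHcard v
        _ = 2*t * (W.filter (fun v => c v = b)).card := by
            rw [Finset.sum_const, smul_eq_mul, mul_comm]
    -- combine
    rw [hbieq, hWcard, hsumW]
    have hsplit : S.card = (S.filter (fun e => e ∈ F)).card
        + (S.filter (fun e => e ∉ F)).card :=
      (Finset.card_filter_add_card_filter_not (p := fun e => e ∈ F)).symm
    have hWsplit : W.card = (W.filter (fun v => c v = true)).card
        + (W.filter (fun v => c v = false)).card := by
      rw [← Finset.card_filter_add_card_filter_not (s := W) (p := fun v => c v = true)]
      congr 1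
      apply Finset.card_nbij' id id <;> intro a ha <;> simp_all
    have h1 := hSH true
    have h2 := hSH false
    -- integer arithmetic
    zify at hsplit hSF h1 h2 hWsplit ⊢
    set x := ((S.filter (fun e => e ∈ F)).card : ℤ)
    set y := ((S.filter (fun e => e ∉ F)).card : ℤ)
    set wa := ((W.filter (fun v => c v = true)).card : ℤ)
    set wb := ((W.filter (fun v => c v = false)).card : ℤ)
    have htz : (1:ℤ) ≤ (t:ℤ) := by exact_mod_cast ht
    rcases le_total wa wb with hab | hab
    · nlinarith
    · nlinarith
  -- apply Hall
  obtain ⟨m, hminj, hmmem⟩ :=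
    (Finset.all_card_le_biUnion_card_iff_exists_injective fE).mp hall
  have htail : ∀ e, (m e).1 = fs e ∨ (m e).1 = sn e := by
    intro e
    have := hmmem e
    rw [hfE] at this
    rcases Finset.mem_union.mp this with h | h
    · exact Or.inl ((hslotmem _ _).mp h).1
    · exact Or.inr ((hslotmem _ _).mp h).1
  set od : V → ℕ := fun v => (univ.filter (fun e => (m e).1 = v)).card with hod
  have hodle : ∀ v, od v ≤ cap v := by
    intro v
    rw [hod, ← hslotcard v]
    apply Finset.card_le_card_of_injOn m
    · intro e he
      rw [Finset.mem_coe] at he ⊢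
      simp only [mem_filter, mem_univ, true_and] at he
      have := hmmem e
      rw [hfE] at this
      rcases Finset.mem_union.mp this with h | h
      · rw [hslotmem] at h ⊢
        exact ⟨he, he ▸ h.1 ▸ h.2⟩
      · rw [hslotmem] at h ⊢
        exact ⟨he, he ▸ h.1 ▸ h.2⟩
    · exact fun a _ b _ hab => hminj hab
  have hodsum : ∑ v : V, od v = (univ : Finset E).card := by
    rw [hod]
    exact (Finset.card_eq_sum_card_fiberwise (fun e _ => mem_univ ((m e).1))).symm
  have hodeq : ∀ v, od v = cap v := by
    have := (Finset.sum_eq_sum_iff_of_le (s := (univ : Finset V))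
      (f := od) (g := cap) (fun v _ => hodle v)).mp (hodsum.trans hsumcap.symm)
    exact fun v => this v (mem_univ v)
  -- define the flow
  set d : ℝ := 2*(t:ℝ) - 1 with hd
  have hdpos : 0 < d := by
    rw [hd]
    have : (1:ℝ) ≤ (t:ℝ) := by exact_mod_cast ht
    linarith
  set σ : E → ℝ := fun e => if (m e).1 = fs e then 1 else -1 with hσ
  set ρ : E → ℝ := fun e => if e ∈ F then 0 else if c (fs e) then -1 else 1 with hρ
  refine ⟨fun e => (2*(t:ℝ) * σ e + ρ e) / d, ?_, ?_⟩
  · intro e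
    have h1 : (1:ℝ) ≤ (t:ℝ) := by exact_mod_cast ht
    have hσv : σ e = 1 ∨ σ e = -1 := by
      rw [hσ]; dsimp only; split
      · exact Or.inl rfl
      · exact Or.inr rfl
    have hρv : ρ e = 0 ∨ ρ e = -1 ∨ ρ e = 1 := by
      rw [hρ]; dsimp only
      split
      · exact Or.inl rfl
      · split
        · exact Or.inr (Or.inl rfl)
        · exact Or.inr (Or.inr rfl)
    have hnum1 : 2*(t:ℝ)-1 ≤ |2*(t:ℝ) * σ e + ρ e| := by
      rw [le_abs]
      rcases hσv with h | h <;> rcases hρv with g | g | g <;> rw [h, g] <;>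
        first
          | (left; linarith)
          | (right; linarith)
    have hnum2 : |2*(t:ℝ) * σ e + ρ e| ≤ 2*(t:ℝ)+1 := by
      rw [abs_le]
      rcases hσv with h | h <;> rcases hρv with g | g | g <;> rw [h, g] <;>
        constructor <;> linarith
    rw [abs_div, abs_of_pos hdpos]
    constructor
    · rw [le_div_iff₀ hdpos, one_mul]
      calc d ≤ 2*(t:ℝ)-1 := by rw [hd]
        _ ≤ _ := hnum1
    · rw [div_le_div_iff₀ hdpos hdpos]
      have : d ≤ d := le_rfl
      nlinarith [hnum2, hdpos]
  · intro v
    suffices hnum : ∑ e ∈ univ.filter (fun e => fs e = v), (2*(t:ℝ) * σ e + ρ e)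
        = ∑ e ∈ univ.filter (fun e => sn e = v), (2*(t:ℝ) * σ e + ρ e) by
      rw [← Finset.sum_div, ← Finset.sum_div, hnum]
    -- sigma part
    have hA1 : (univ.filter (fun e => (m e).1 = v)).card = od v := by rw [hod]
    have hA1' : univ.filter (fun e => (fs e = v ∨ sn e = v) ∧ (m e).1 = v)
        = univ.filter (fun e => (m e).1 = v) := by
      ext e
      simp only [mem_filter, mem_univ, true_and]
      constructor
      · rintro ⟨_, h⟩; exact h
      · intro h
        refine ⟨?_, h⟩
        rcases htail e with h' | h'
        · exact Or.inl (h'.symm.trans h)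
        · exact Or.inr (h'.symm.trans h)
    have hA2 : (univ.filter (fun e => (fs e = v ∨ sn e = v) ∧ ¬ (m e).1 = v)).card
        = 2*t+1 - od v := by
      have hsplit := Finset.card_filter_add_card_filter_not (s := inc v)
        (p := fun e => (m e).1 = v)
      rw [hinc] at hsplit
      rw [Finset.filter_filter, Finset.filter_filter] at hsplit
      have h2 : (univ.filter (fun e => (fs e = v ∨ sn e = v) ∧ (m e).1 = v)).card = od v := by
        rw [hA1', hA1]
      rw [h2] at hsplit
      have h3 := hinccard v
      rw [hinc] at h3
      omega
    have hσpt : ∀ e : E, (if fs e = v then σ e else 0) - (if sn e = v then σ e else 0)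
        = (if (m e).1 = v then (1:ℝ) else 0)
          - (if (fs e = v ∨ sn e = v) ∧ ¬ (m e).1 = v then (1:ℝ) else 0) := by
      intro e
      have hne := hnl e
      have htl := htail e
      rw [hσ]
      by_cases h1 : fs e = v <;> by_cases h2 : sn e = v <;> by_cases h3 : (m e).1 = v
      · exact absurd (h1.trans h2.symm) hne
      · exact absurd (h1.trans h2.symm) hne
      · have : (m e).1 = fs e := h3.trans h1.symm
        simp [h1, h2, h3, this]
      · have : ¬ (m e).1 = fs e := fun h => h3 (h.trans h1)
        simp [h1, h2, h3, this]
      · have hmf : ¬ (m e).1 = fs e := fun h => h1 (h.symm.trans h3)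
        rw [if_neg h1, if_pos h2]
        rw [if_pos h3, if_neg (fun hcon => hcon.2 h3)]
        norm_num
        simp only [if_neg hmf]
        norm_num
      · have : (m e).1 = fs e := by
          rcases htl with h | h
          · exact h
          · exact absurd (h.trans h2) h3
        simp [h1, h2, h3, this]
      · exfalso
        rcases htl with h | h
        · exact h1 (h.symm.trans h3)
        · exact h2 (h.symm.trans h3)
      · simp [h1, h2, h3]
    have hσdiff : (∑ e ∈ univ.filter (fun e => fs e = v), σ e)
        - (∑ e ∈ univ.filter (fun e => sn e = v), σ e)
        = (od v : ℝ) - ((2*t+1 : ℕ) - (od v : ℕ) : ℕ) := by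
      rw [Finset.sum_filter, Finset.sum_filter, ← Finset.sum_sub_distrib]
      rw [Finset.sum_congr rfl fun e _ => hσpt e]
      rw [Finset.sum_sub_distrib, ← Finset.sum_filter, ← Finset.sum_filter]
      rw [Finset.sum_const, Finset.sum_const, nsmul_eq_mul, nsmul_eq_mul, mul_one, mul_one]
      rw [hA1, hA2]
    -- rho part
    have hρpt : ∀ e : E, (if fs e = v then ρ e else 0) - (if sn e = v then ρ e else 0)
        = if (fs e = v ∨ sn e = v) ∧ e ∉ F then (if c v then (-1:ℝ) else 1) else 0 := by
      intro e
      have hne := hnl e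
      rw [hρ]
      by_cases h1 : fs e = v <;> by_cases h2 : sn e = v <;> by_cases h3 : e ∈ F
      · exact absurd (h1.trans h2.symm) hne
      · exact absurd (h1.trans h2.symm) hne
      · simp [h1, h2, h3]
      · rw [h1]; simp [h1, h2, h3]
      · simp [h1, h2, h3]
      · have hcc := hc e h3
        rw [h2] at hcc
        simp only [h1, h2, h3, if_false, if_true, true_or, or_true, not_false_iff, and_true,
          true_and, sub_zero, zero_sub]
        cases hfs : c (fs e) <;> cases hv : c v <;> rw [hfs, hv] at hcc <;> simp_all
      · simp [h1, h2, h3]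
      · simp [h1, h2, h3]
    have hρdiff : (∑ e ∈ univ.filter (fun e => fs e = v), ρ e)
        - (∑ e ∈ univ.filter (fun e => sn e = v), ρ e)
        = (2*t : ℕ) * (if c v then (-1:ℝ) else 1) := by
      rw [Finset.sum_filter, Finset.sum_filter, ← Finset.sum_sub_distrib]
      rw [Finset.sum_congr rfl fun e _ => hρpt e]
      rw [← Finset.sum_filter, Finset.sum_const, nsmul_eq_mul]
      congr 2
      have := hHcard v
      rw [hinc, Finset.filter_filter] at this
      rw [this]
    -- combine
    rw [Finset.sum_add_distrib, Finset.sum_add_distrib, ← Finset.mul_sum, ← Finset.mul_sum]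
    have hodv : od v = cap v := hodeq v
    have hcapv : cap v = if c v then t+1 else t := by rw [hcap]
    have hodle' : od v ≤ 2*t+1 := by
      rw [hodv, hcapv]
      split <;> omega
    by_cases hcv : c v
    · have hodval : od v = t+1 := by rw [hodv, hcapv, if_pos hcv]
      rw [if_pos hcv] at hρdiff
      have e1 : ((od v : ℕ) : ℝ) = (t:ℝ)+1 := by rw [hodval]; push_cast; ring
      have e2 : (((2*t+1 - od v : ℕ)) : ℝ) = (t:ℝ) := by
        rw [hodval]
        have : 2*t+1 - (t+1) = t := by omega
        rw [this]
      rw [e1, e2] at hσdiff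
      have e3 : ((2*t : ℕ) : ℝ) = 2*(t:ℝ) := by push_cast; ring
      rw [e3] at hρdiff
      linear_combination (2*(t:ℝ)) * hσdiff + hρdiff
    · have hodval : od v = t := by rw [hodv, hcapv, if_neg hcv]
      rw [if_neg hcv] at hρdiff
      have e1 : ((od v : ℕ) : ℝ) = (t:ℝ) := by rw [hodval]
      have e2 : (((2*t+1 - od v : ℕ)) : ℝ) = (t:ℝ)+1 := by
        rw [hodval]
        have : 2*t+1 - t = t+1 := by omega
        rw [this]
        push_cast
        ring
      rw [e1, e2] at hσdiff
      have e3 : ((2*t : ℕ) : ℝ) = 2*(t:ℝ) := by push_cast; ring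
      rw [e3] at hρdiff
      linear_combination (2*(t:ℝ)) * hσdiff + hρdiff

end NZF3


open Finset NZF NZF2 NZF3 in
theorem hasNowhereZeroFlow_iff_one_factor_bipartite_complement (t : ℕ) (ht : 1 ≤ t)
    (G : Multigraph) (hreg : G.IsRegular (2 * t + 1)) :
    G.HasNowhereZeroFlow (2 + 2 / (2 * (t : ℝ) - 1)) ↔
      ∃ F : Set G.E, G.IsOneFactor F ∧ G.BipartiteWithout F := by
  classical
  letI : Fintype G.E := Fintype.ofFinite _
  letI : Fintype G.V := Fintype.ofFinite _
  have htR : (1:ℝ) ≤ (t:ℝ) := by exact_mod_cast ht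
  have hdpos : (0:ℝ) < 2*(t:ℝ)-1 := by linarith
  have hr : 2 + 2 / (2*(t:ℝ) - 1) - 1 = (2*(t:ℝ)+1)/(2*(t:ℝ)-1) := by
    field_simp
    ring
  have hdeg : ∀ v, (univ.filter (fun e => G.fst e = v)).card
      + (univ.filter (fun e => G.snd e = v)).card = 2*t+1 := by
    intro v
    have h := hreg v
    unfold Multigraph.degree at h
    rw [Nat.card_eq_fintype_card, Nat.card_eq_fintype_card,
      Fintype.card_subtype, Fintype.card_subtype] at h
    exact h
  have hsetf : ∀ v : G.V, {e : G.E | G.fst e = v}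
      = ↑(univ.filter (fun e => G.fst e = v)) := by
    intro v; ext e; simp
  have hsets : ∀ v : G.V, {e : G.E | G.snd e = v}
      = ↑(univ.filter (fun e => G.snd e = v)) := by
    intro v; ext e; simp
  constructor
  · rintro ⟨φ, hb, hcons⟩
    have hcons' : ∀ v, ∑ e ∈ univ.filter (fun e => G.fst e = v), φ e
        = ∑ e ∈ univ.filter (fun e => G.snd e = v), φ e := by
      intro v
      have := hcons v
      rwa [hsetf v, hsets v, finsum_mem_coe_finset, finsum_mem_coe_finset] at this
    rw [hr] at hb
    -- scale
    set ψ : G.E → ℝ := fun e => (2*(t:ℝ)-1) * φ e with hψ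
    set lb : G.E → ℤ := fun e => if 0 ≤ φ e then (2*(t:ℤ)-1) else -(2*(t:ℤ)+1) with hlb
    set ub : G.E → ℤ := fun e => if 0 ≤ φ e then (2*(t:ℤ)+1) else -(2*(t:ℤ)-1) with hub
    have hbd : ∀ e, (lb e : ℝ) ≤ ψ e ∧ ψ e ≤ ub e := by
      intro e
      obtain ⟨hb1, hb2⟩ := hb e
      rw [hψ, hlb, hub]
      dsimp only
      by_cases h : 0 ≤ φ e
      · rw [if_pos h, if_pos h]
        rw [abs_of_nonneg h] at hb1 hb2
        rw [le_div_iff₀ hdpos] at hb2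
        constructor
        · push_cast; nlinarith
        · push_cast; nlinarith
      · rw [if_neg h, if_neg h]
        push_neg at h
        rw [abs_of_neg h] at hb1 hb2
        rw [le_div_iff₀ hdpos] at hb2
        constructor
        · push_cast; nlinarith
        · push_cast; nlinarith
    have hcψ : ∀ v, ∑ e ∈ univ.filter (fun e => G.fst e = v), ψ e
        = ∑ e ∈ univ.filter (fun e => G.snd e = v), ψ e := by
      intro v
      rw [hψ]
      dsimp only
      rw [← Finset.mul_sum, ← Finset.mul_sum, hcons' v]
    obtain ⟨ζ, hζb, hζc⟩ := NZF.exists_int_flow G.fst G.snd lb ub ψ hbd hcψ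
    have habs : ∀ e, (2*(t:ℤ)-1) ≤ |ζ e| ∧ |ζ e| ≤ 2*(t:ℤ)+1 := by
      intro e
      obtain ⟨h1, h2⟩ := hζb e
      rw [hlb] at h1
      rw [hub] at h2
      dsimp only at h1 h2
      have htz : (1:ℤ) ≤ (t:ℤ) := by exact_mod_cast ht
      by_cases h : 0 ≤ φ e
      · rw [if_pos h] at h1 h2
        constructor <;> [rw [abs_of_nonneg (by omega)]; rw [abs_of_nonneg (by omega)]] <;> omega
      · rw [if_neg h] at h1 h2
        constructor <;> [rw [abs_of_neg (by omega)]; rw [abs_of_neg (by omega)]] <;> omega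
    have hζcons : ∀ v, ∑ e ∈ univ.filter (fun e => G.fst e = v), ζ e
        = ∑ e ∈ univ.filter (fun e => G.snd e = v), ζ e := by
      intro v
      have := hζc v
      exact_mod_cast this
    obtain ⟨F, c, hF1, hF2, hcF⟩ := NZF2.analyze t ht G.fst G.snd hdeg ζ habs hζcons
    exact ⟨F, ⟨hF1, hF2⟩, ⟨c, hcF⟩⟩
  · rintro ⟨F, ⟨hF1, hF2⟩, ⟨c, hcF⟩⟩
    obtain ⟨φ, hb, hcons⟩ := NZF3.construct t ht G.fst G.snd hdeg F hF1 hF2 c hcF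
    refine ⟨φ, fun e => ?_, fun v => ?_⟩
    · rw [hr]
      exact hb e
    · rw [hsetf v, hsets v, finsum_mem_coe_finset, finsum_mem_coe_finset]
      exact hcons v
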